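/- For the L×L toric grid (L ≥ 4 even), the communication height between the two maximum independent sets satisfies Γ = φ(E,O) = L + 1. -/

import Mathlib

open scoped Classical

/-- The toric grid: vertex set `(ZMod L) × (ZMod L)`, with an edge between two
vertices iff they differ by `±1 (mod L)` in exactly one coordinate. -/
def torus (L : ℕ) : SimpleGraph (ZMod L × ZMod L) :=
  SimpleGraph.fromRel (fun u v =>
    (u.1 = v.1 ∧ u.2 = v.2 + 1) ∨ (u.2 = v.2 ∧ u.1 = v.1 + 1))

/-- A vertex of the toric grid is even if its coordinate sum is even. -/
def isEvenVertex {L : ℕ} [NeZero L] (v : ZMod L × ZMod L) : Prop :=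
  Even (v.1.val + v.2.val)

/-- The even maximum independent set `E`. -/
noncomputable def evenClass (L : ℕ) [NeZero L] : Finset (ZMod L × ZMod L) :=
  Finset.univ.filter (fun v => isEvenVertex v)

/-- `I` is an independent set of the toric grid. -/
def Indep (L : ℕ) (I : Finset (ZMod L × ZMod L)) : Prop :=
  ∀ u ∈ I, ∀ v ∈ I, ¬ (torus L).Adj u v

/-- The efficiency gap `Δ(I) = L²/2 − |I|`. -/
def gap (L : ℕ) (I : Finset (ZMod L × ZMod L)) : ℕ := L ^ 2 / 2 - I.card

/-- `ω` is a path of independent sets from `I` to `I'` in which consecutive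
configurations differ by a single flip (adding or removing one vertex). -/
def IsFlipPath (L : ℕ) (ω : List (Finset (ZMod L × ZMod L)))
    (I I' : Finset (ZMod L × ZMod L)) : Prop :=
  ω ≠ [] ∧ ω.head? = some I ∧ ω.getLast? = some I' ∧
  (∀ J ∈ ω, Indep L J) ∧
  ω.Chain' (fun J K => (symmDiff J K).card = 1)

/-- The communication height `φ(I,I') = min over paths `ω : I → I'` of
`max_{J ∈ ω} Δ(J)`. -/
noncomputable def commHeight (L : ℕ) (I I' : Finset (ZMod L × ZMod L)) : ℕ :=
  sInf {b : ℕ | ∃ ω, IsFlipPath L ω I I' ∧ ∀ J ∈ ω, gap L J ≤ b}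

/-- The odd maximum independent set `O`. -/
noncomputable def oddClass (L : ℕ) [NeZero L] : Finset (ZMod L × ZMod L) :=
  Finset.univ.filter (fun v => ¬ isEvenVertex v)

set_option linter.unusedSectionVars false
set_option maxHeartbeats 2000000

namespace S14
open Finset
variable {L : ℕ} [NeZero L]



abbrev V (L : ℕ) := ZMod L × ZMod L

lemma adj_iff {u v : V L} : (torus L).Adj u v ↔ u ≠ v ∧
    (v = (u.1, u.2 + 1) ∨ v = (u.1, u.2 - 1) ∨ v = (u.1 + 1, u.2) ∨ v = (u.1 - 1, u.2)) := by
  constructor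
  · rintro ⟨hne, h | h⟩
    · refine ⟨hne, ?_⟩
      rcases h with ⟨h1, h2⟩ | ⟨h2, h1⟩
      · right; left; rw [Prod.ext_iff]; simp [← h1, h2]
      · right; right; right; rw [Prod.ext_iff]; simp [← h2, h1]
    · refine ⟨hne, ?_⟩
      rcases h with ⟨h1, h2⟩ | ⟨h2, h1⟩
      · left; rw [Prod.ext_iff]; simp [h1, h2]
      · right; right; left; rw [Prod.ext_iff]; simp [h2, h1]
  · rintro ⟨hne, h⟩
    refine ⟨hne, ?_⟩
    rcases h with h | h | h | h
    · right; rw [h]; exact Or.inl ⟨rfl, rfl⟩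
    · left; rw [h]; left; exact ⟨rfl, by ring⟩
    · right; rw [h]; exact Or.inr ⟨rfl, rfl⟩
    · left; rw [h]; right; exact ⟨rfl, by ring⟩

lemma val_add_parity (hdvd : 2 ∣ L) (x y : ZMod L) :
    Even ((x + y).val) ↔ Even (x.val + y.val) := by
  rw [ZMod.val_add, Nat.even_iff, Nat.even_iff, Nat.mod_mod_of_dvd _ hdvd]

lemma val_one' (hL : 4 ≤ L) : (1 : ZMod L).val = 1 := ZMod.val_one'' (by omega) -- check name

lemma val_add_one_parity (hL : 4 ≤ L) (hdvd : 2 ∣ L) (x : ZMod L) :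
    Even ((x + 1).val) ↔ ¬ Even x.val := by
  rw [val_add_parity hdvd, val_one' hL, Nat.even_add_one]

lemma val_sub_one_parity (hL : 4 ≤ L) (hdvd : 2 ∣ L) (x : ZMod L) :
    Even ((x - 1).val) ↔ ¬ Even x.val := by
  have := val_add_one_parity hL hdvd (x - 1)
  simp only [sub_add_cancel] at this
  tauto

lemma adj_parity (hL : 4 ≤ L) (hdvd : 2 ∣ L) {u v : V L} (h : (torus L).Adj u v) :
    (Even (u.1.val + u.2.val) ↔ ¬ Even (v.1.val + v.2.val)) := by
  rcases (adj_iff.1 h).2 with h | h | h | h <;> subst h <;>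
    simp only [Nat.even_add, val_add_one_parity hL hdvd, val_sub_one_parity hL hdvd] <;> tauto


open Finset


lemma cycle_bound (S : Finset (ZMod L)) (h : ∀ x ∈ S, x + 1 ∉ S) :
    2 * S.card ≤ L := by
  have hinj : Function.Injective (fun x : ZMod L => x + 1) := add_left_injective 1
  have hdisj : Disjoint S (S.image (fun x => x + 1)) := by
    rw [Finset.disjoint_right]
    rintro a ha haS
    rw [Finset.mem_image] at ha
    obtain ⟨x, hx, rfl⟩ := ha
    exact h x hx haS
  have := Finset.card_union_of_disjoint hdisj
  have hle : (S ∪ S.image (fun x => x + 1)).card ≤ Fintype.card (ZMod L) :=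
    Finset.card_le_univ _
  rw [this, Finset.card_image_of_injective _ hinj, ZMod.card] at hle
  omega

lemma cycle_step (S : Finset (ZMod L)) (h : ∀ x ∈ S, x + 1 ∉ S)
    (hcard : 2 * S.card = L) : ∀ x ∈ S, x + 2 ∈ S := by
  have hinj : Function.Injective (fun x : ZMod L => x + 1) := add_left_injective 1
  have hdisj : Disjoint S (S.image (fun x => x + 1)) := by
    rw [Finset.disjoint_right]
    rintro a ha haS
    rw [Finset.mem_image] at ha
    obtain ⟨x, hx, rfl⟩ := ha
    exact h x hx haS
  have huniv : S ∪ S.image (fun x => x + 1) = Finset.univ := by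
    apply Finset.eq_univ_of_card
    rw [Finset.card_union_of_disjoint hdisj, Finset.card_image_of_injective _ hinj, ZMod.card]
    omega
  intro x hx
  have : x + 2 ∈ S ∪ S.image (fun x => x + 1) := huniv ▸ Finset.mem_univ _
  rcases Finset.mem_union.1 this with h2 | h2
  · exact h2
  · exfalso
    rw [Finset.mem_image] at h2
    obtain ⟨y, hy, hxy⟩ := h2
    have : y = x + 1 := by
      have : y + 1 = x + 1 + 1 := by rw [hxy]; ring
      exact add_left_injective 1 this
    subst this
    exact h x hx hy

lemma cycle_closure (S : Finset (ZMod L)) (h : ∀ x ∈ S, x + 1 ∉ S)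
    (hcard : 2 * S.card = L) (x : ZMod L) (hx : x ∈ S) :
    ∀ k : ℕ, x + (2 * k : ℕ) ∈ S := by
  intro k
  induction k with
  | zero => simpa using hx
  | succ n ih =>
      have : x + (2 * (n+1) : ℕ) = (x + (2 * n : ℕ)) + 2 := by push_cast; ring
      rw [this]
      exact cycle_step S h hcard _ ih

lemma cycle_parity_mem (hdvd : 2 ∣ L) (S : Finset (ZMod L)) (h : ∀ x ∈ S, x + 1 ∉ S)
    (hcard : 2 * S.card = L) (x : ZMod L) (hx : x ∈ S) (y : ZMod L)
    (hpar : Even y.val ↔ Even x.val) : y ∈ S := by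
  have hd : y = x + ((y - x).val : ZMod L) := by
    rw [ZMod.natCast_val, ZMod.cast_id]; ring
  have hpar2 : Even ((y - x).val) := by
    have h1 : Even ((x + (y - x)).val) ↔ Even (x.val + (y - x).val) := by
      rw [ZMod.val_add, Nat.even_iff, Nat.even_iff, Nat.mod_mod_of_dvd _ hdvd]
    have h2 : x + (y - x) = y := by ring
    rw [h2] at h1
    rw [Nat.even_add] at h1
    tauto
  obtain ⟨k, hk⟩ := hpar2
  have : (y - x).val = 2 * k := by omega
  rw [this] at hd
  rw [hd]
  exact cycle_closure S h hcard x hx k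

lemma cycle_full (hL : 4 ≤ L) (hdvd : 2 ∣ L) (S : Finset (ZMod L))
    (h : ∀ x ∈ S, x + 1 ∉ S) (hcard : 2 * S.card = L) :
    (∀ y, y ∈ S ↔ Even y.val) ∨ (∀ y, y ∈ S ↔ ¬ Even y.val) := by
  have hne : S.Nonempty := by
    rw [← Finset.card_pos]; omega
  obtain ⟨x, hx⟩ := hne
  have key : ∀ y ∈ S, (Even y.val ↔ Even x.val) := by
    intro y hy
    by_contra hcon
    -- then S contains both parities, hence S = univ, contradicting card
    have hall : ∀ z : ZMod L, z ∈ S := by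
      intro z
      by_cases hz : Even z.val ↔ Even x.val
      · exact cycle_parity_mem hdvd S h hcard x hx z hz
      · exact cycle_parity_mem hdvd S h hcard y hy z (by tauto)
    have : S = Finset.univ := Finset.eq_univ_iff_forall.2 hall
    rw [this, Finset.card_univ, ZMod.card] at hcard
    omega
  by_cases hxe : Even x.val
  · left
    intro y
    constructor
    · intro hy; rw [key y hy]; exact hxe
    · intro hy; exact cycle_parity_mem hdvd S h hcard x hx y (by tauto)
  · right
    intro y
    constructor
    · intro hy; rw [key y hy]; exact hxe
    · intro hy; exact cycle_parity_mem hdvd S h hcard x hx y (by tauto)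

open Finset


lemma range_even_card (m : ℕ) :
    ((Finset.range (2 * m)).filter (fun x => Even x)).card = m := by
  induction m with
  | zero => simp
  | succ n ih =>
      have h1 : 2 * (n + 1) = (2 * n + 1) + 1 := by ring
      rw [h1, Finset.range_add_one, Finset.range_add_one, Finset.filter_insert, Finset.filter_insert]
      have e1 : ¬ Even (2 * n + 1) := by simp [Nat.even_add_one]
      have e2 : Even (2 * n) := even_two_mul n
      rw [if_neg e1, if_pos e2, Finset.card_insert_of_notMem (by simp), ih]

lemma zmod_parity_card (hdvd : 2 ∣ L) :
    ((Finset.univ : Finset (ZMod L)).filter (fun x => Even x.val)).card = L / 2 := by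
  obtain ⟨m, rfl⟩ := hdvd
  have : ((Finset.univ : Finset (ZMod (2*m))).filter (fun x => Even x.val)).card
      = ((Finset.range (2*m)).filter (fun x => Even x)).card := by
    apply Finset.card_bij (fun (x : ZMod (2*m)) _ => x.val)
    · intro a ha
      simp only [Finset.mem_filter, Finset.mem_range] at *
      exact ⟨a.val_lt, ha.2⟩
    · intro a ha b hb hab
      exact ZMod.val_injective _ hab
    · intro b hb
      simp only [Finset.mem_filter, Finset.mem_range] at hb
      refine ⟨(b : ZMod (2*m)), ?_, ?_⟩
      · simp only [Finset.mem_filter, Finset.mem_univ, true_and]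
        rw [ZMod.val_cast_of_lt hb.1]; exact hb.2
      · rw [ZMod.val_cast_of_lt hb.1]
  rw [this, range_even_card]
  omega

lemma zmod_parity_card' (hdvd : 2 ∣ L) :
    ((Finset.univ : Finset (ZMod L)).filter (fun x => ¬ Even x.val)).card = L / 2 := by
  have h := Finset.card_filter_add_card_filter_not
    (s := (Finset.univ : Finset (ZMod L))) (p := fun x => Even x.val)
  rw [zmod_parity_card hdvd, Finset.card_univ, ZMod.card] at h
  omega

lemma zmod_parity_card_iff (hdvd : 2 ∣ L) (b : Bool) :
    ((Finset.univ : Finset (ZMod L)).filter (fun x => Even x.val = b)).card = L / 2 := by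
  cases b
  · rw [← zmod_parity_card' hdvd]; congr 1; ext x; simp
  · rw [← zmod_parity_card hdvd]; congr 1; ext x; simp


/-! ### Columns and rows -/

def colS (J : Finset (V L)) (c : ZMod L) : Finset (V L) := J.filter (fun v => v.1 = c)
def rowS (J : Finset (V L)) (r : ZMod L) : Finset (V L) := J.filter (fun v => v.2 = r)

lemma one_ne_zero' (hL : 4 ≤ L) : (1 : ZMod L) ≠ 0 := by
  haveI : Fact (1 < L) := ⟨by omega⟩
  exact one_ne_zero

lemma adj_vert (hL : 4 ≤ L) (c x : ZMod L) : (torus L).Adj (c, x) (c, x + 1) := by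
  rw [adj_iff]
  constructor
  · intro h
    rw [Prod.ext_iff] at h
    have := h.2
    simp only at this
    have h1 : (1 : ZMod L) = 0 := by
      have := left_eq_add.mp this
      exact this
    exact one_ne_zero' hL h1
  · left; rfl

lemma adj_horiz (hL : 4 ≤ L) (c x : ZMod L) : (torus L).Adj (c, x) (c + 1, x) := by
  rw [adj_iff]
  constructor
  · intro h
    rw [Prod.ext_iff] at h
    have := h.1
    simp only at this
    exact one_ne_zero' hL (left_eq_add.mp this)
  · right; right; left; rfl

lemma colT_mem (J : Finset (V L)) (c : ZMod L) (x : ZMod L) :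
    x ∈ (colS J c).image Prod.snd ↔ (c, x) ∈ J := by
  simp only [colS, Finset.mem_image, Finset.mem_filter]
  constructor
  · rintro ⟨⟨v1, v2⟩, ⟨hv, rfl⟩, rfl⟩
    simpa [hv] using hv ▸ hv.1
  · intro h
    exact ⟨(c, x), ⟨h, rfl⟩, rfl⟩

lemma rowT_mem (J : Finset (V L)) (r : ZMod L) (x : ZMod L) :
    x ∈ (rowS J r).image Prod.fst ↔ (x, r) ∈ J := by
  simp only [rowS, Finset.mem_image, Finset.mem_filter]
  constructor
  · rintro ⟨⟨v1, v2⟩, ⟨hv, rfl⟩, rfl⟩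
    simpa [hv] using hv ▸ hv.1
  · intro h
    exact ⟨(x, r), ⟨h, rfl⟩, rfl⟩

lemma colT_card (J : Finset (V L)) (c : ZMod L) :
    ((colS J c).image Prod.snd).card = (colS J c).card := by
  apply Finset.card_image_of_injOn
  intro v hv w hw hvw
  simp only [colS, Finset.mem_coe, Finset.mem_filter] at hv hw
  exact Prod.ext (hv.2.trans hw.2.symm) hvw

lemma rowT_card (J : Finset (V L)) (r : ZMod L) :
    ((rowS J r).image Prod.fst).card = (rowS J r).card := by
  apply Finset.card_image_of_injOn
  intro v hv w hw hvw
  simp only [rowS, Finset.mem_coe, Finset.mem_filter] at hv hw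
  exact Prod.ext hvw (hv.2.trans hw.2.symm)

lemma colT_indep (hL : 4 ≤ L) {J : Finset (V L)} (hJ : Indep L J) (c : ZMod L) :
    ∀ x ∈ (colS J c).image Prod.snd, x + 1 ∉ (colS J c).image Prod.snd := by
  intro x hx hx1
  rw [colT_mem] at hx hx1
  exact hJ _ hx _ hx1 (adj_vert hL c x)

lemma rowT_indep (hL : 4 ≤ L) {J : Finset (V L)} (hJ : Indep L J) (r : ZMod L) :
    ∀ x ∈ (rowS J r).image Prod.fst, x + 1 ∉ (rowS J r).image Prod.fst := by
  intro x hx hx1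
  rw [rowT_mem] at hx hx1
  exact hJ _ hx _ hx1 (adj_horiz hL x r)

lemma colS_card_le (hL : 4 ≤ L) {J : Finset (V L)} (hJ : Indep L J) (c : ZMod L) :
    2 * (colS J c).card ≤ L := by
  rw [← colT_card]
  exact cycle_bound _ (colT_indep hL hJ c)

lemma rowS_card_le (hL : 4 ≤ L) {J : Finset (V L)} (hJ : Indep L J) (r : ZMod L) :
    2 * (rowS J r).card ≤ L := by
  rw [← rowT_card]
  exact cycle_bound _ (rowT_indep hL hJ r)

/-- Full-column dichotomy. -/
lemma col_dichotomy (hL : 4 ≤ L) (hdvd : 2 ∣ L) {J : Finset (V L)} (hJ : Indep L J)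
    (c : ZMod L) (hfull : 2 * (colS J c).card = L) :
    (∀ j, Even (c.val + j.val) → (c, j) ∈ J) ∨
    (∀ j, ¬ Even (c.val + j.val) → (c, j) ∈ J) := by
  have hfull' : 2 * ((colS J c).image Prod.snd).card = L := by rw [colT_card]; exact hfull
  rcases cycle_full hL hdvd _ (colT_indep hL hJ c) hfull' with h | h
  · by_cases hc : Even c.val
    · left; intro j hj
      rw [← colT_mem, h]
      rw [Nat.even_add] at hj; tauto
    · right; intro j hj
      rw [← colT_mem, h]
      rw [Nat.even_add] at hj; tauto
  · by_cases hc : Even c.val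
    · right; intro j hj
      rw [← colT_mem, h]
      rw [Nat.even_add] at hj; tauto
    · left; intro j hj
      rw [← colT_mem, h]
      rw [Nat.even_add] at hj; tauto

lemma row_dichotomy (hL : 4 ≤ L) (hdvd : 2 ∣ L) {J : Finset (V L)} (hJ : Indep L J)
    (r : ZMod L) (hfull : 2 * (rowS J r).card = L) :
    (∀ i, Even (i.val + r.val) → (i, r) ∈ J) ∨
    (∀ i, ¬ Even (i.val + r.val) → (i, r) ∈ J) := by
  have hfull' : 2 * ((rowS J r).image Prod.fst).card = L := by rw [rowT_card]; exact hfull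
  rcases cycle_full hL hdvd _ (rowT_indep hL hJ r) hfull' with h | h
  · by_cases hc : Even r.val
    · left; intro j hj
      rw [← rowT_mem, h]
      rw [Nat.even_add] at hj; tauto
    · right; intro j hj
      rw [← rowT_mem, h]
      rw [Nat.even_add] at hj; tauto
  · by_cases hc : Even r.val
    · right; intro j hj
      rw [← rowT_mem, h]
      rw [Nat.even_add] at hj; tauto
    · left; intro j hj
      rw [← rowT_mem, h]
      rw [Nat.even_add] at hj; tauto

lemma card_eq_sum_colS (J : Finset (V L)) :
    J.card = ∑ c ∈ (Finset.univ : Finset (ZMod L)), (colS J c).card :=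
  Finset.card_eq_sum_card_fiberwise (fun x _ => Finset.mem_univ x.1)

lemma card_eq_sum_rowS (J : Finset (V L)) :
    J.card = ∑ r ∈ (Finset.univ : Finset (ZMod L)), (rowS J r).card :=
  Finset.card_eq_sum_card_fiberwise (fun x _ => Finset.mem_univ x.2)

/-- half of the column: the even part -/
lemma parity_filter_card (hdvd : 2 ∣ L) (c : ZMod L) :
    ((Finset.univ : Finset (ZMod L)).filter (fun j => Even (c.val + j.val))).card = L / 2 := by
  by_cases hc : Even c.val
  · rw [← zmod_parity_card hdvd]
    congr 1; ext j; simp only [Finset.mem_filter, Nat.even_add]; tauto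
  · rw [← zmod_parity_card' hdvd]
    congr 1; ext j; simp only [Finset.mem_filter, Nat.even_add]; tauto

lemma parity_filter_card' (hdvd : 2 ∣ L) (c : ZMod L) :
    ((Finset.univ : Finset (ZMod L)).filter (fun j => ¬ Even (c.val + j.val))).card = L / 2 := by
  by_cases hc : Even c.val
  · rw [← zmod_parity_card' hdvd]
    congr 1; ext j; simp only [Finset.mem_filter, Nat.even_add]; tauto
  · rw [← zmod_parity_card hdvd]
    congr 1; ext j; simp only [Finset.mem_filter, Nat.even_add]; tauto

/-- If a column of an independent set contains the whole even class of that
column, its cardinality is exactly `L/2`. -/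
lemma colS_card_of_ECol (hL : 4 ≤ L) (hdvd : 2 ∣ L) {J : Finset (V L)} (hJ : Indep L J)
    (c : ZMod L) (hE : ∀ j, Even (c.val + j.val) → (c, j) ∈ J) :
    2 * (colS J c).card = L := by
  have hsub : ((Finset.univ : Finset (ZMod L)).filter (fun j => Even (c.val + j.val))).image
      (fun j => ((c : ZMod L), j)) ⊆ colS J c := by
    intro v hv
    simp only [Finset.mem_image, Finset.mem_filter] at hv
    obtain ⟨j, ⟨_, hj⟩, rfl⟩ := hv
    simp only [colS, Finset.mem_filter]
    exact ⟨hE j hj, trivial⟩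
  have hcard := Finset.card_le_card hsub
  rw [Finset.card_image_of_injective _ (fun a b h => (Prod.ext_iff.1 h).2),
    parity_filter_card hdvd] at hcard
  have := colS_card_le hL hJ c
  omega

lemma rowS_card_of_ERow (hL : 4 ≤ L) (hdvd : 2 ∣ L) {J : Finset (V L)} (hJ : Indep L J)
    (r : ZMod L) (hE : ∀ i, Even (i.val + r.val) → (i, r) ∈ J) :
    2 * (rowS J r).card = L := by
  have hsub : ((Finset.univ : Finset (ZMod L)).filter (fun i => Even (r.val + i.val))).image
      (fun i => (i, (r : ZMod L))) ⊆ rowS J r := by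
    intro v hv
    simp only [Finset.mem_image, Finset.mem_filter] at hv
    obtain ⟨i, ⟨_, hi⟩, rfl⟩ := hv
    simp only [rowS, Finset.mem_filter]
    exact ⟨hE i (by rwa [Nat.add_comm] at hi), trivial⟩
  have hcard := Finset.card_le_card hsub
  rw [Finset.card_image_of_injective _ (fun a b h => (Prod.ext_iff.1 h).1),
    parity_filter_card hdvd] at hcard
  have := rowS_card_le hL hJ r
  omega

/-- A column containing its full even class cannot contain an odd vertex. -/
lemma col_no_extra (hL : 4 ≤ L) (hdvd : 2 ∣ L) {J : Finset (V L)} (hJ : Indep L J)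
    (c : ZMod L) (hE : ∀ j, Even (c.val + j.val) → (c, j) ∈ J)
    (j₀ : ZMod L) (hodd : ¬ Even (c.val + j₀.val)) (hmem : (c, j₀) ∈ J) : False := by
  have hsub : insert ((c : ZMod L), j₀)
      (((Finset.univ : Finset (ZMod L)).filter (fun j => Even (c.val + j.val))).image
      (fun j => ((c : ZMod L), j))) ⊆ colS J c := by
    intro v hv
    rcases Finset.mem_insert.1 hv with rfl | hv
    · simp only [colS, Finset.mem_filter]; exact ⟨hmem, trivial⟩
    · simp only [Finset.mem_image, Finset.mem_filter] at hv
      obtain ⟨j, ⟨_, hj⟩, rfl⟩ := hv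
      simp only [colS, Finset.mem_filter]
      exact ⟨hE j hj, trivial⟩
  have hcard := Finset.card_le_card hsub
  have hnotmem : ((c : ZMod L), j₀) ∉
      (((Finset.univ : Finset (ZMod L)).filter (fun j => Even (c.val + j.val))).image
      (fun j => ((c : ZMod L), j))) := by
    simp only [Finset.mem_image, Finset.mem_filter]
    rintro ⟨j, ⟨_, hj⟩, hej⟩
    rw [Prod.ext_iff] at hej
    have hj2 : j = j₀ := hej.2
    exact hodd (hj2 ▸ hj)
  rw [Finset.card_insert_of_notMem hnotmem,
    Finset.card_image_of_injective _ (fun a b h => (Prod.ext_iff.1 h).2),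
    parity_filter_card hdvd] at hcard
  have := colS_card_le hL hJ c
  omega

lemma row_no_extra (hL : 4 ≤ L) (hdvd : 2 ∣ L) {J : Finset (V L)} (hJ : Indep L J)
    (r : ZMod L) (hE : ∀ i, Even (i.val + r.val) → (i, r) ∈ J)
    (i₀ : ZMod L) (hodd : ¬ Even (i₀.val + r.val)) (hmem : (i₀, r) ∈ J) : False := by
  have hsub : insert (i₀, (r : ZMod L))
      (((Finset.univ : Finset (ZMod L)).filter (fun i => Even (r.val + i.val))).image
      (fun i => (i, (r : ZMod L)))) ⊆ rowS J r := by
    intro v hv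
    rcases Finset.mem_insert.1 hv with rfl | hv
    · simp only [rowS, Finset.mem_filter]; exact ⟨hmem, trivial⟩
    · simp only [Finset.mem_image, Finset.mem_filter] at hv
      obtain ⟨i, ⟨_, hi⟩, rfl⟩ := hv
      simp only [rowS, Finset.mem_filter]
      exact ⟨hE i (by rwa [Nat.add_comm] at hi), trivial⟩
  have hcard := Finset.card_le_card hsub
  have hnotmem : (i₀, (r : ZMod L)) ∉
      (((Finset.univ : Finset (ZMod L)).filter (fun i => Even (r.val + i.val))).image
      (fun i => (i, (r : ZMod L)))) := by
    simp only [Finset.mem_image, Finset.mem_filter]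
    rintro ⟨i, ⟨_, hi⟩, hei⟩
    rw [Prod.ext_iff] at hei
    rw [Nat.add_comm] at hi
    have hi2 : i = i₀ := hei.1
    exact hodd (hi2 ▸ hi)
  rw [Finset.card_insert_of_notMem hnotmem,
    Finset.card_image_of_injective _ (fun a b h => (Prod.ext_iff.1 h).1),
    parity_filter_card hdvd] at hcard
  have := rowS_card_le hL hJ r
  omega

/-- An `E`-full column and an `O`-full row cannot coexist. -/
lemma ECol_ORow_false (hL : 4 ≤ L) (hdvd : 2 ∣ L) {J : Finset (V L)} (hJ : Indep L J)
    {a r : ZMod L} (hE : ∀ j, Even (a.val + j.val) → (a, j) ∈ J)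
    (hO : ∀ i, ¬ Even (i.val + r.val) → (i, r) ∈ J) : False := by
  by_cases hpar : Even (a.val + r.val)
  · have h1 : (a, r) ∈ J := hE r hpar
    have h2 : ((a + 1 : ZMod L), r) ∈ J := by
      apply hO
      rw [Nat.even_add] at hpar ⊢
      rw [val_add_one_parity hL hdvd]
      tauto
    exact hJ _ h1 _ h2 (adj_horiz hL a r)
  · have h1 : (a, r) ∈ J := hO a hpar
    have h2 : (a, (r + 1 : ZMod L)) ∈ J := by
      apply hE
      rw [Nat.even_add] at hpar ⊢
      rw [val_add_one_parity hL hdvd]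
      tauto
    exact hJ _ h1 _ h2 (adj_vert hL a r)

/-- An `E`-full row and an `O`-full column cannot coexist. -/
lemma ERow_OCol_false (hL : 4 ≤ L) (hdvd : 2 ∣ L) {J : Finset (V L)} (hJ : Indep L J)
    {b c : ZMod L} (hE : ∀ i, Even (i.val + b.val) → (i, b) ∈ J)
    (hO : ∀ j, ¬ Even (c.val + j.val) → (c, j) ∈ J) : False := by
  by_cases hpar : Even (c.val + b.val)
  · have h1 : (c, b) ∈ J := hE c hpar
    have h2 : (c, (b + 1 : ZMod L)) ∈ J := by
      apply hO
      rw [Nat.even_add] at hpar ⊢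
      rw [val_add_one_parity hL hdvd]
      tauto
    exact hJ _ h1 _ h2 (adj_vert hL c b)
  · have h1 : (c, b) ∈ J := hO b hpar
    have h2 : ((c + 1 : ZMod L), b) ∈ J := by
      apply hE
      rw [Nat.even_add] at hpar ⊢
      rw [val_add_one_parity hL hdvd]
      tauto
    exact hJ _ h1 _ h2 (adj_horiz hL c b)

lemma symmDiff_card_one {A B : Finset (V L)} (h : (symmDiff A B).card = 1) :
    (∃ v, v ∉ A ∧ B = insert v A) ∨ (∃ v, v ∉ B ∧ A = insert v B) := by
  have hd : symmDiff A B = (A \ B) ∪ (B \ A) := by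
    rw [symmDiff_def]; rfl
  have hdisj : Disjoint (A \ B) (B \ A) := disjoint_sdiff_sdiff
  rw [hd, Finset.card_union_of_disjoint hdisj] at h
  rcases Nat.add_eq_one_iff.1 h with ⟨h1, h2⟩ | ⟨h1, h2⟩
  · left
    obtain ⟨v, hv⟩ := Finset.card_eq_one.1 h2
    have hAB : A ⊆ B := by
      rw [← Finset.sdiff_eq_empty_iff_subset]
      exact Finset.card_eq_zero.1 h1
    refine ⟨v, ?_, ?_⟩
    · have : v ∈ B \ A := hv ▸ Finset.mem_singleton_self v
      exact (Finset.mem_sdiff.1 this).2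
    · have := Finset.union_sdiff_of_subset hAB
      rw [hv] at this
      rw [← this, Finset.union_comm]
      ext x; simp [Finset.mem_insert, Or.comm]
  · right
    obtain ⟨v, hv⟩ := Finset.card_eq_one.1 h1
    have hBA : B ⊆ A := by
      rw [← Finset.sdiff_eq_empty_iff_subset]
      exact Finset.card_eq_zero.1 h2
    refine ⟨v, ?_, ?_⟩
    · have : v ∈ A \ B := hv ▸ Finset.mem_singleton_self v
      exact (Finset.mem_sdiff.1 this).2
    · have := Finset.union_sdiff_of_subset hBA
      rw [hv] at this
      rw [← this, Finset.union_comm]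
      ext x; simp [Finset.mem_insert, Or.comm]

lemma colS_evenClass (hdvd : 2 ∣ L) (c : ZMod L) :
    (colS (evenClass L) c).card = L / 2 := by
  have : colS (evenClass L) c =
      ((Finset.univ : Finset (ZMod L)).filter (fun j => Even (c.val + j.val))).image
      (fun j => ((c : ZMod L), j)) := by
    ext ⟨x, y⟩
    simp only [colS, evenClass, isEvenVertex.eq_1, Finset.mem_filter, Finset.mem_image,
      Finset.mem_univ, true_and, Prod.ext_iff]
    constructor
    · rintro ⟨he, rfl⟩
      exact ⟨y, he, rfl, rfl⟩
    · rintro ⟨j, hj, rfl, rfl⟩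
      exact ⟨hj, rfl⟩
  rw [this, Finset.card_image_of_injective _ (fun a b h => (Prod.ext_iff.1 h).2),
    parity_filter_card hdvd]

lemma card_evenClass (hdvd : 2 ∣ L) : (evenClass L).card = L * (L / 2) := by
  rw [card_eq_sum_colS]
  rw [Finset.sum_congr rfl (fun c _ => colS_evenClass hdvd c)]
  simp [Finset.card_univ, ZMod.card, mul_comm]

lemma sum_col_bound (hL : 4 ≤ L) {m : ℕ} (hm : L = 2 * m) {X : Finset (V L)}
    (bound : ℕ) (h : ∀ c, (colS X c).card ≤ bound) : X.card ≤ 2 * m * bound := by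
  rw [card_eq_sum_colS X]
  calc ∑ c ∈ (Finset.univ : Finset (ZMod L)), (colS X c).card
      ≤ ∑ _c ∈ (Finset.univ : Finset (ZMod L)), bound := Finset.sum_le_sum (fun c _ => h c)
    _ = L * bound := by rw [Finset.sum_const, Finset.card_univ, ZMod.card]; ring
    _ = 2 * m * bound := by rw [hm]

lemma sum_row_bound (hL : 4 ≤ L) {m : ℕ} (hm : L = 2 * m) {X : Finset (V L)}
    (bound : ℕ) (h : ∀ r, (rowS X r).card ≤ bound) : X.card ≤ 2 * m * bound := by
  rw [card_eq_sum_rowS X]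
  calc ∑ r ∈ (Finset.univ : Finset (ZMod L)), (rowS X r).card
      ≤ ∑ _r ∈ (Finset.univ : Finset (ZMod L)), bound := Finset.sum_le_sum (fun r _ => h r)
    _ = L * bound := by rw [Finset.sum_const, Finset.card_univ, ZMod.card]; ring
    _ = 2 * m * bound := by rw [hm]

lemma card_le_indep (hL : 4 ≤ L) {m : ℕ} (hm : L = 2 * m) {X : Finset (V L)}
    (hJ : Indep L X) : X.card ≤ 2 * m * m := by
  apply sum_col_bound hL hm
  intro c
  have := colS_card_le hL hJ c
  omega

lemma card_le_of_no_full_col (hL : 4 ≤ L) {m : ℕ} (hm : L = 2 * m) {X : Finset (V L)}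
    (hJ : Indep L X) (h : ∀ c, 2 * (colS X c).card ≠ L) :
    X.card ≤ 2 * m * (m - 1) := by
  apply sum_col_bound hL hm
  intro c
  have h1 := colS_card_le hL hJ c
  have h2 := h c
  omega

lemma ex_full_col (hL : 4 ≤ L) {m : ℕ} (hm : L = 2 * m) {X : Finset (V L)}
    (hJ : Indep L X) (hc : 2 * m * (m - 1) < X.card) :
    ∃ c, 2 * (colS X c).card = L := by
  by_contra h
  push_neg at h
  exact absurd (card_le_of_no_full_col hL hm hJ h) (by omega)

lemma ex_full_row (hL : 4 ≤ L) {m : ℕ} (hm : L = 2 * m) {X : Finset (V L)}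
    (hJ : Indep L X) (hc : 2 * m * (m - 1) < X.card) :
    ∃ r, 2 * (rowS X r).card = L := by
  by_contra h
  push_neg at h
  have : X.card ≤ 2 * m * (m - 1) := by
    apply sum_row_bound hL hm
    intro r
    have h1 := rowS_card_le hL hJ r
    have h2 := h r
    omega
  omega

/-- An `O`-full column (resp. row) exists. -/
def HasO (L : ℕ) [NeZero L] (X : Finset (V L)) : Prop :=
  (∃ c : ZMod L, ∀ j, ¬ Even (c.val + j.val) → (c, j) ∈ X) ∨
  (∃ r : ZMod L, ∀ i, ¬ Even (i.val + r.val) → (i, r) ∈ X)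

lemma hasO_mono {X Y : Finset (V L)} (hXY : X ⊆ Y) (h : HasO L X) : HasO L Y := by
  rcases h with ⟨c, hc⟩ | ⟨r, hr⟩
  · exact Or.inl ⟨c, fun j hj => hXY (hc j hj)⟩
  · exact Or.inr ⟨r, fun i hi => hXY (hr i hi)⟩

lemma hasO_odd : HasO L (oddClass L) := by
  left
  refine ⟨0, fun j hj => ?_⟩
  simp only [oddClass, Finset.mem_filter, Finset.mem_univ, true_and]
  exact fun h => hj h

lemma not_hasO_even (hL : 4 ≤ L) : ¬ HasO L (evenClass L) := by
  have hkey : ∀ x : ZMod L, ∃ y : ZMod L, ¬ Even (x.val + y.val) := by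
    intro x
    by_cases hx : Even x.val
    · refine ⟨1, ?_⟩
      rw [ZMod.val_one'' (by omega), Nat.even_add]
      simp [hx]
    · exact ⟨0, by simpa using hx⟩
  rintro (⟨c, hc⟩ | ⟨r, hr⟩)
  · obtain ⟨j, hj⟩ := hkey c
    have := hc j hj
    simp only [evenClass, isEvenVertex.eq_1, Finset.mem_filter] at this
    exact hj this.2
  · obtain ⟨i, hi⟩ := hkey r
    have hi' : ¬ Even (i.val + r.val) := by rwa [Nat.add_comm] at hi
    have := hr i hi'
    simp only [evenClass, isEvenVertex.eq_1, Finset.mem_filter] at this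
    exact hi' this.2

set_option maxHeartbeats 1000000 in
theorem no_low_path (hL : 4 ≤ L) (hdvd : 2 ∣ L) (ω : List (Finset (V L)))
    (hpath : IsFlipPath L ω (evenClass L) (oddClass L))
    (hb : ∀ J ∈ ω, gap L J ≤ L) : False := by
  obtain ⟨hne, hhead, hlast, hindep, hchain⟩ := hpath
  obtain ⟨m, hm⟩ := hdvd
  have hm2 : 2 ≤ m := by omega
  set n := ω.length with hn_def
  have hn : 0 < n := List.length_pos_iff.2 hne
  -- basic accessors
  have hget_mem : ∀ (i : ℕ) (h : i < n), ω.get ⟨i, h⟩ ∈ ω := fun i h => ω.get_mem ⟨i, h⟩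
  have hindep' : ∀ (i : ℕ) (h : i < n), Indep L (ω.get ⟨i, h⟩) :=
    fun i h => hindep _ (hget_mem i h)
  have hhalf : L ^ 2 / 2 = 2 * m * m := by
    have h1 : L ^ 2 = 2 * (2 * m * m) := by rw [hm]; ring
    rw [h1]
    omega
  have hgap' : ∀ (i : ℕ) (h : i < n), 2 * m * m - (ω.get ⟨i, h⟩).card ≤ L := by
    intro i h
    have := hb _ (hget_mem i h)
    rwa [gap, hhalf] at this
  have hcard_ge : ∀ (i : ℕ) (h : i < n), 2 * m * m - 2 * m ≤ (ω.get ⟨i, h⟩).card := by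
    intro i h
    have h1 := hgap' i h
    omega
  have hchain' : ∀ (i : ℕ) (h : i < ω.length - 1),
      (symmDiff (ω.get ⟨i, by omega⟩) (ω.get ⟨i + 1, by omega⟩)).card = 1 :=
    fun i h => List.isChain_iff_getElem.1 hchain i (by omega)
  -- head and last
  have hhead' : ω.get ⟨0, hn⟩ = evenClass L := by
    have h1 : ω.head? = some (ω.head hne) := List.head?_eq_head hne
    rw [hhead] at h1
    have h2 : evenClass L = ω.head hne := by exact Option.some_injective _ h1
    rw [List.head_eq_getElem_zero hne] at h2
    rw [List.get_eq_getElem]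
    exact h2.symm
  have hlast' : ω.get ⟨n - 1, by omega⟩ = oddClass L := by
    have h1 : ω.getLast? = some (ω.getLast hne) := List.getLast?_eq_getLast_of_ne_nil hne
    rw [hlast] at h1
    have h2 : oddClass L = ω.getLast hne := Option.some_injective _ h1
    rw [List.getLast_eq_getElem] at h2
    rw [List.get_eq_getElem]
    exact h2.symm
  -- the first time with an O-bridge
  have hPex : ∃ i : ℕ, ∃ h : i < n, HasO L (ω.get ⟨i, h⟩) :=
    ⟨n - 1, by omega, hlast' ▸ hasO_odd⟩
  classical
  set P : ℕ → Prop := fun i => ∃ h : i < n, HasO L (ω.get ⟨i, h⟩) with hP_def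
  have hPex' : ∃ i, P i := hPex
  let τ := Nat.find hPex'
  obtain ⟨hτn, hOA⟩ : P τ := Nat.find_spec hPex'
  have hmin : ∀ i, i < τ → ¬ P i := fun i h => Nat.find_min hPex' h
  have hcongr : ∀ (i j : ℕ) (hi : i < n) (hj : j < n), i = j →
      ω.get ⟨i, hi⟩ = ω.get ⟨j, hj⟩ := by
    intro i j hi hj h
    subst h
    rfl
  have hdvd2 : 2 ∣ L := ⟨m, hm⟩
  have hexp : 2 * m * (m - 1) + 2 * m = 2 * m * m := by
    have h1 : m - 1 + 1 = m := by omega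
    calc 2 * m * (m - 1) + 2 * m = 2 * m * ((m - 1) + 1) := by ring
      _ = 2 * m * m := by rw [h1]
  -- τ ≥ 1
  have hτ0 : ¬ HasO L (ω.get ⟨0, hn⟩) := by rw [hhead']; exact not_hasO_even hL
  have hτpos : 0 < τ := by
    rcases Nat.eq_zero_or_pos τ with h | h
    · exact absurd (by rw [hcongr 0 τ hn hτn h.symm]; exact hOA) hτ0
    · exact h
  have hBn : τ - 1 < n := by omega
  set A := ω.get ⟨τ, hτn⟩ with hA_def
  set B := ω.get ⟨τ - 1, hBn⟩ with hB_def
  have hIndA : Indep L A := hindep' τ hτn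
  have hIndB : Indep L B := hindep' (τ - 1) hBn
  have hsdBA : (symmDiff B A).card = 1 := by
    have h1 := hchain' (τ - 1) (by omega)
    have h2 : ω.get ⟨τ - 1 + 1, by omega⟩ = A := hcongr _ _ _ _ (by omega)
    have h3 : ω.get ⟨τ - 1, by omega⟩ = B := hcongr _ _ _ _ rfl
    rwa [h2, h3] at h1
  have hnOB : ¬ HasO L B := fun h => hmin (τ - 1) (by omega) ⟨hBn, h⟩
  obtain ⟨w, hwB, hA⟩ : ∃ w, w ∉ B ∧ A = insert w B := by
    rcases symmDiff_card_one hsdBA with h | ⟨v, hvA, hB⟩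
    · exact h
    · exfalso
      exact hnOB (by rw [hB]; exact hasO_mono (Finset.subset_insert v A) hOA)
  have hCB : 2 * m * m - 2 * m ≤ B.card := hcard_ge (τ - 1) hBn
  have hCA : A.card = B.card + 1 := by rw [hA]; exact Finset.card_insert_of_notMem hwB
  -- full column and row of A of type O
  obtain ⟨c', hc'full⟩ : ∃ c, 2 * (colS A c).card = L := by
    apply ex_full_col hL hm hIndA
    omega
  obtain ⟨r', hr'full⟩ : ∃ r, 2 * (rowS A r).card = L := by
    apply ex_full_row hL hm hIndA
    omega
  have hOc : ∀ j, ¬ Even (c'.val + j.val) → (c', j) ∈ A := by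
    rcases col_dichotomy hL hdvd2 hIndA c' hc'full with hEc | hOc
    · exfalso
      rcases hOA with ⟨c₁, h₁⟩ | ⟨r₁, h₁⟩
      · rcases row_dichotomy hL hdvd2 hIndA r' hr'full with hEr | hOr
        · exact ERow_OCol_false hL hdvd2 hIndA hEr h₁
        · exact ECol_ORow_false hL hdvd2 hIndA hEc hOr
      · exact ECol_ORow_false hL hdvd2 hIndA hEc h₁
    · exact hOc
  have hOr : ∀ i, ¬ Even (i.val + r'.val) → (i, r') ∈ A := by
    rcases row_dichotomy hL hdvd2 hIndA r' hr'full with hEr | hOr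
    · exact absurd hOc (fun h => ERow_OCol_false hL hdvd2 hIndA hEr h)
    · exact hOr
  -- identify w
  have hwc : w.1 = c' ∧ ¬ Even (c'.val + w.2.val) := by
    by_contra hcon
    have hOB : ∀ j, ¬ Even (c'.val + j.val) → (c', j) ∈ B := by
      intro j hj
      have hmem := hOc j hj
      rw [hA, Finset.mem_insert] at hmem
      rcases hmem with he | hmem
      · exact absurd (by rw [← he]; exact ⟨rfl, hj⟩) hcon
      · exact hmem
    exact hnOB (Or.inl ⟨c', hOB⟩)
  have hwr : w.2 = r' ∧ ¬ Even (w.1.val + r'.val) := by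
    by_contra hcon
    have hOB : ∀ i, ¬ Even (i.val + r'.val) → (i, r') ∈ B := by
      intro i hi
      have hmem := hOr i hi
      rw [hA, Finset.mem_insert] at hmem
      rcases hmem with he | hmem
      · exact absurd (by rw [← he]; exact ⟨rfl, hi⟩) hcon
      · exact hmem
    exact hnOB (Or.inr ⟨r', hOB⟩)
  have hwodd : ¬ Even (c'.val + r'.val) := by
    have := hwc.2
    rwa [hwr.1] at this
  -- B has no full lines
  have hnofullcolB : ∀ c, 2 * (colS B c).card ≠ L := by
    intro c hfull
    rcases col_dichotomy hL hdvd2 hIndB c hfull with hEc | hOcB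
    · have hEcA : ∀ j, Even (c.val + j.val) → (c, j) ∈ A := fun j hj => by
        rw [hA]; exact Finset.mem_insert_of_mem (hEc j hj)
      exact ECol_ORow_false hL hdvd2 hIndA hEcA hOr
    · exact hnOB (Or.inl ⟨c, hOcB⟩)
  have hnofullrowB : ∀ r, 2 * (rowS B r).card ≠ L := by
    intro r hfull
    rcases row_dichotomy hL hdvd2 hIndB r hfull with hEr | hOrB
    · have hErA : ∀ i, Even (i.val + r.val) → (i, r) ∈ A := fun i hi => by
        rw [hA]; exact Finset.mem_insert_of_mem (hEr i hi)
      exact ERow_OCol_false hL hdvd2 hIndA hErA hOc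
    · exact hnOB (Or.inr ⟨r, hOrB⟩)
  have hcardB : B.card = 2 * m * m - 2 * m := by
    have h1 := card_le_of_no_full_col hL hm hIndB hnofullcolB
    omega
  -- τ ≥ 2
  have hcardE : (evenClass L).card = 2 * m * m := by
    rw [card_evenClass hdvd2, hm, Nat.mul_div_cancel_left m (by norm_num)]
  have hτ2 : 2 ≤ τ := by
    by_contra h
    have hτ1 : τ - 1 = 0 := by omega
    have hBE : B = evenClass L := by rw [← hhead']; exact hcongr _ _ _ _ hτ1
    rw [hBE, hcardE] at hcardB
    omega
  -- the configuration two steps before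
  have hCn : τ - 2 < n := by omega
  set C := ω.get ⟨τ - 2, hCn⟩ with hC_def
  have hIndC : Indep L C := hindep' (τ - 2) hCn
  have hnOC : ¬ HasO L C := fun h => hmin (τ - 2) (by omega) ⟨hCn, h⟩
  have hsdCB : (symmDiff C B).card = 1 := by
    have h1 := hchain' (τ - 2) (by omega)
    have h2 : ω.get ⟨τ - 2 + 1, by omega⟩ = B := hcongr _ _ _ _ (by omega)
    have h3 : ω.get ⟨τ - 2, by omega⟩ = C := hcongr _ _ _ _ rfl
    rwa [h2, h3] at h1
  obtain ⟨u, huB, hCeq⟩ : ∃ u, u ∉ B ∧ C = insert u B := by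
    rcases symmDiff_card_one hsdCB with ⟨v, hvC, hBeq⟩ | h
    · exfalso
      have hcc : B.card = C.card + 1 := by rw [hBeq]; exact Finset.card_insert_of_notMem hvC
      have h4 : 2 * m * m - 2 * m ≤ C.card := by rw [hC_def]; exact hcard_ge (τ - 2) hCn
      omega
    · exact h
  have hcardC : C.card = 2 * m * m - 2 * m + 1 := by
    rw [hCeq, Finset.card_insert_of_notMem huB, hcardB]
  -- full lines of C, of type E
  obtain ⟨a₀, ha₀⟩ : ∃ c, 2 * (colS C c).card = L := by
    apply ex_full_col hL hm hIndC
    omega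
  obtain ⟨b₀, hb₀⟩ : ∃ r, 2 * (rowS C r).card = L := by
    apply ex_full_row hL hm hIndC
    omega
  have hECa : ∀ j, Even (a₀.val + j.val) → (a₀, j) ∈ C := by
    rcases col_dichotomy hL hdvd2 hIndC a₀ ha₀ with h | h
    · exact h
    · exact absurd (Or.inl ⟨a₀, h⟩) hnOC
  have hERb : ∀ i, Even (i.val + b₀.val) → (i, b₀) ∈ C := by
    rcases row_dichotomy hL hdvd2 hIndC b₀ hb₀ with h | h
    · exact h
    · exact absurd (Or.inr ⟨b₀, h⟩) hnOC
  -- identify u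
  have hua : u.1 = a₀ ∧ Even (a₀.val + u.2.val) := by
    by_contra hcon
    have hEB : ∀ j, Even (a₀.val + j.val) → (a₀, j) ∈ B := by
      intro j hj
      have hmem := hECa j hj
      rw [hCeq, Finset.mem_insert] at hmem
      rcases hmem with he | hmem
      · exact absurd (by rw [← he]; exact ⟨rfl, hj⟩) hcon
      · exact hmem
    exact hnofullcolB a₀ (colS_card_of_ECol hL hdvd2 hIndB a₀ hEB)
  have hub : u.2 = b₀ ∧ Even (u.1.val + b₀.val) := by
    by_contra hcon
    have hEB : ∀ i, Even (i.val + b₀.val) → (i, b₀) ∈ B := by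
      intro i hi
      have hmem := hERb i hi
      rw [hCeq, Finset.mem_insert] at hmem
      rcases hmem with he | hmem
      · exact absurd (by rw [← he]; exact ⟨rfl, hi⟩) hcon
      · exact hmem
    exact hnofullrowB b₀ (rowS_card_of_ERow hL hdvd2 hIndB b₀ hEB)
  have hueven : Even (a₀.val + b₀.val) := by
    have := hua.2
    rwa [hub.1] at this
  -- the value of 2 in ZMod L
  have hval2 : (2 : ZMod L).val = 2 := by
    have h1 : ((2 : ℕ) : ZMod L) = (2 : ZMod L) := by norm_cast
    rw [← h1, ZMod.val_cast_of_lt (by omega)]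
  have hpar2 : ∀ x : ZMod L, Even ((x + 2).val) ↔ Even x.val := by
    intro x
    rw [val_add_parity hdvd2, hval2, Nat.even_add]
    simp
  have h2z : (2 : ZMod L) ≠ 0 := by
    intro h
    have := hval2
    rw [h, ZMod.val_zero] at this
    omega
  -- a₀ ≠ c' and b₀ ≠ r'
  have hane : a₀ ≠ c' := by
    intro he
    have hparodd : ¬ Even (c'.val + (r' + 2).val) := by
      rw [Nat.even_add, hpar2]
      rw [Nat.even_add] at hwodd
      exact hwodd
    have hmem : ((c' : ZMod L), r' + 2) ∈ A := hOc (r' + 2) hparodd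
    rw [hA, Finset.mem_insert] at hmem
    rcases hmem with he2 | hmem
    · have h1 : (r' + 2 : ZMod L) = w.2 := congrArg Prod.snd he2
      rw [hwr.1] at h1
      exact h2z (by
        have h3 : r' + 2 = r' + 0 := by rw [h1, add_zero]
        exact add_left_cancel h3)
    · have hmemC : ((c' : ZMod L), r' + 2) ∈ C := by
        rw [hCeq]; exact Finset.mem_insert_of_mem hmem
      rw [← he] at hmemC hparodd
      exact col_no_extra hL hdvd2 hIndC a₀ hECa (r' + 2) hparodd hmemC
  have hbne : b₀ ≠ r' := by
    intro he
    have hparodd : ¬ Even ((c' + 2).val + r'.val) := by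
      rw [Nat.even_add, hpar2]
      rw [Nat.even_add] at hwodd
      exact hwodd
    have hmem : ((c' + 2 : ZMod L), r') ∈ A := hOr (c' + 2) hparodd
    rw [hA, Finset.mem_insert] at hmem
    rcases hmem with he2 | hmem
    · have h1 : (c' + 2 : ZMod L) = w.1 := congrArg Prod.fst he2
      rw [hwc.1] at h1
      exact h2z (by
        have h3 : c' + 2 = c' + 0 := by rw [h1, add_zero]
        exact add_left_cancel h3)
    · have hmemC : ((c' + 2 : ZMod L), r') ∈ C := by
        rw [hCeq]; exact Finset.mem_insert_of_mem hmem
      rw [← he] at hmemC hparodd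
      exact row_no_extra hL hdvd2 hIndC b₀ hERb (c' + 2) hparodd hmemC
  -- final case analysis
  by_cases hcb : Even (c'.val + b₀.val)
  · by_cases har : Even (a₀.val + r'.val)
    · rw [Nat.even_add] at hcb har hueven hwodd
      exact hwodd ((hcb.trans hueven.symm).trans har)
    · have hz : ((a₀ : ZMod L), r') ∈ A := hOr a₀ har
      rw [hA, Finset.mem_insert] at hz
      rcases hz with he2 | hz
      · apply hane
        have h1 : a₀ = w.1 := by rw [← he2]
        rw [h1, hwc.1]
      · have hzC : ((a₀ : ZMod L), r') ∈ C := by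
          rw [hCeq]; exact Finset.mem_insert_of_mem hz
        exact col_no_extra hL hdvd2 hIndC a₀ hECa r' har hzC
  · have hz : ((c' : ZMod L), b₀) ∈ A := hOc b₀ hcb
    rw [hA, Finset.mem_insert] at hz
    rcases hz with he2 | hz
    · apply hbne
      have h1 : b₀ = w.2 := by rw [← he2]
      rw [h1, hwr.1]
    · have hzC : ((c' : ZMod L), b₀) ∈ C := by
        rw [hCeq]; exact Finset.mem_insert_of_mem hz
      exact row_no_extra hL hdvd2 hIndC b₀ hERb c' hcb hzC


/-! ### Upper bound: reachability with bounded gap -/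

def Reach (L : ℕ) (Bd : ℕ) (X Y : Finset (V L)) : Prop :=
  ∃ ω, IsFlipPath L ω X Y ∧ ∀ J ∈ ω, gap L J ≤ Bd

lemma gap_mono {X Y : Finset (V L)} (h : X ⊆ Y) : gap L Y ≤ gap L X :=
  Nat.sub_le_sub_left (Finset.card_le_card h) _

lemma indep_subset {X Y : Finset (V L)} (hY : Indep L Y) (h : X ⊆ Y) : Indep L X :=
  fun u hu v hv => hY u (h hu) v (h hv)

lemma reach_refl {Bd : ℕ} {X : Finset (V L)} (h : Indep L X) (hg : gap L X ≤ Bd) :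
    Reach L Bd X X := by
  refine ⟨[X], ⟨by simp, by simp, by simp, by simpa using h, List.isChain_singleton _⟩, by simpa using hg⟩

lemma reach_trans {Bd : ℕ} {X Y Z : Finset (V L)} (h1 : Reach L Bd X Y)
    (h2 : Reach L Bd Y Z) : Reach L Bd X Z := by
  obtain ⟨ω₁, ⟨hne1, hh1, hl1, hi1, hc1⟩, hg1⟩ := h1
  obtain ⟨ω₂, ⟨hne2, hh2, hl2, hi2, hc2⟩, hg2⟩ := h2
  obtain ⟨t, rfl⟩ : ∃ t, ω₂ = Y :: t := by
    cases ω₂ with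
    | nil => exact absurd rfl hne2
    | cons a t =>
        simp only [List.head?_cons, Option.some_inj] at hh2
        exact ⟨t, by rw [hh2]⟩
  refine ⟨ω₁ ++ t, ⟨?_, ?_, ?_, ?_, ?_⟩, ?_⟩
  · simp [hne1]
  · rwa [List.head?_append_of_ne_nil _ hne1]
  · cases t with
    | nil =>
        simp only [List.getLast?_singleton, Option.some_inj] at hl2
        rw [List.append_nil, hl1, hl2]
    | cons b t' =>
        rw [List.getLast?_append_cons]
        rw [List.getLast?_cons_cons] at hl2
        exact hl2
  · intro J hJ
    rcases List.mem_append.1 hJ with h | h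
    · exact hi1 J h
    · exact hi2 J (List.mem_cons_of_mem _ h)
  · apply List.IsChain.append hc1 (hc2.tail)
    intro x hx y hy
    rw [hl1] at hx
    simp only [Option.mem_def, Option.some_inj] at hx
    subst hx
    rcases List.isChain_cons.1 hc2 with ⟨hrel, _⟩
    exact hrel y hy
  · intro J hJ
    rcases List.mem_append.1 hJ with h | h
    · exact hg1 J h
    · exact hg2 J (List.mem_cons_of_mem _ h)

lemma symmDiff_insert_card {X : Finset (V L)} {v : V L} (hv : v ∉ X) :
    (symmDiff X (insert v X)).card = 1 := by
  have : symmDiff X (insert v X) = {v} := by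
    ext x
    rw [Finset.mem_symmDiff]
    simp only [Finset.mem_insert, Finset.mem_singleton]
    constructor
    · rintro (⟨hx, hni⟩ | ⟨hx, hni⟩)
      · exact absurd (Or.inr hx) hni
      · rcases hx with rfl | hx
        · rfl
        · exact absurd hx hni
    · rintro rfl
      exact Or.inr ⟨Or.inl rfl, hv⟩
  rw [this, Finset.card_singleton]

lemma reach_insert {Bd : ℕ} {X : Finset (V L)} {v : V L} (hv : v ∉ X)
    (hI : Indep L (insert v X)) (hg : gap L X ≤ Bd) : Reach L Bd X (insert v X) := by
  refine ⟨[X, insert v X], ⟨by simp, by simp, by simp, ?_, ?_⟩, ?_⟩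
  · intro J hJ
    rcases List.mem_cons.1 hJ with rfl | hJ
    · exact indep_subset hI (Finset.subset_insert _ _)
    · rcases List.mem_cons.1 hJ with rfl | hJ
      · exact hI
      · simp at hJ
  · refine List.isChain_cons_cons.2 ?_
    exact ⟨symmDiff_insert_card hv, List.isChain_singleton _⟩
  · intro J hJ
    rcases List.mem_cons.1 hJ with rfl | hJ
    · exact hg
    · rcases List.mem_cons.1 hJ with rfl | hJ
      · exact le_trans (gap_mono (Finset.subset_insert _ _)) hg
      · simp at hJ

lemma reach_erase {Bd : ℕ} {X : Finset (V L)} {v : V L} (hI : Indep L X)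
    (hg : gap L (X.erase v) ≤ Bd) : Reach L Bd X (X.erase v) := by
  by_cases hv : v ∈ X
  · have hX : X = insert v (X.erase v) := (Finset.insert_erase hv).symm
    refine ⟨[X, X.erase v], ⟨by simp, by simp, by simp, ?_, ?_⟩, ?_⟩
    · intro J hJ
      rcases List.mem_cons.1 hJ with rfl | hJ
      · exact hI
      · rcases List.mem_cons.1 hJ with rfl | hJ
        · exact indep_subset hI (Finset.erase_subset _ _)
        · simp at hJ
    · refine List.isChain_cons_cons.2 ?_
      constructor
      · have h1 : (symmDiff (X.erase v) X).card = 1 := by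
          nth_rewrite 2 [hX]
          exact symmDiff_insert_card (Finset.notMem_erase _ _)
        rwa [symmDiff_comm] at h1
      · exact List.isChain_singleton _
    · intro J hJ
      rcases List.mem_cons.1 hJ with rfl | hJ
      · exact le_trans (gap_mono (Finset.erase_subset _ _)) hg
      · rcases List.mem_cons.1 hJ with rfl | hJ
        · exact hg
        · simp at hJ
  · rw [Finset.erase_eq_of_notMem hv] at hg ⊢
    exact reach_refl hI hg

lemma reach_union {Bd : ℕ} {X : Finset (V L)} (S : Finset (V L))
    (hI : Indep L (X ∪ S)) (hg : gap L X ≤ Bd) : Reach L Bd X (X ∪ S) := by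
  induction S using Finset.induction_on with
  | empty => rw [Finset.union_empty]; exact reach_refl (indep_subset hI Finset.subset_union_left) hg
  | @insert a S ha ih =>
      rw [Finset.union_insert]
      have hIS : Indep L (X ∪ S) :=
        indep_subset hI (by rw [Finset.union_insert]; exact Finset.subset_insert _ _)
      have h1 : Reach L Bd X (X ∪ S) := ih (hIS)
      by_cases haX : a ∈ X ∪ S
      · rwa [Finset.insert_eq_of_mem haX]
      · refine reach_trans h1 (reach_insert haX ?_ (le_trans (gap_mono Finset.subset_union_left) hg))
        rw [← Finset.union_insert]
        exact hI

lemma reach_sdiff {Bd : ℕ} {X : Finset (V L)} (S : Finset (V L))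
    (hI : Indep L X) (hg : gap L (X \ S) ≤ Bd) : Reach L Bd X (X \ S) := by
  induction S using Finset.induction_on with
  | empty => rw [Finset.sdiff_empty] at hg ⊢; exact reach_refl hI hg
  | @insert a S ha ih =>
      have hsplit : X \ insert a S = (X \ S).erase a := by
        ext x
        simp only [Finset.mem_sdiff, Finset.mem_insert, Finset.mem_erase]
        tauto
      have hg2 : gap L (X \ S) ≤ Bd := by
        refine le_trans (gap_mono ?_) hg
        intro x hx
        simp only [Finset.mem_sdiff, Finset.mem_insert] at hx ⊢
        tauto
      have h1 : Reach L Bd X (X \ S) := ih hg2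
      rw [hsplit]
      refine reach_trans h1 (reach_erase (indep_subset hI (Finset.sdiff_subset)) ?_)
      rw [← hsplit]
      exact hg

/-! ### The sweep states -/

noncomputable def stE (L : ℕ) [NeZero L] (t : ℕ) : Finset (V L) :=
  Finset.univ.filter (fun v => Even (v.1.val + v.2.val) ∧ t ≤ v.1.val)

noncomputable def stO (L : ℕ) [NeZero L] (s : ℕ) : Finset (V L) :=
  Finset.univ.filter (fun v => ¬ Even (v.1.val + v.2.val) ∧ 1 ≤ v.1.val ∧ v.1.val ≤ s)

lemma mem_stE {t : ℕ} {v : V L} :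
    v ∈ stE L t ↔ Even (v.1.val + v.2.val) ∧ t ≤ v.1.val := by
  simp [stE]

lemma mem_stO {s : ℕ} {v : V L} :
    v ∈ stO L s ↔ ¬ Even (v.1.val + v.2.val) ∧ 1 ≤ v.1.val ∧ v.1.val ≤ s := by
  simp [stO]

lemma colS_oddClass (hdvd : 2 ∣ L) (c : ZMod L) :
    (colS (oddClass L) c).card = L / 2 := by
  have : colS (oddClass L) c =
      ((Finset.univ : Finset (ZMod L)).filter (fun j => ¬ Even (c.val + j.val))).image
      (fun j => ((c : ZMod L), j)) := by
    ext ⟨x, y⟩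
    simp only [colS, oddClass, isEvenVertex.eq_1, Finset.mem_filter, Finset.mem_image,
      Finset.mem_univ, true_and, Prod.ext_iff]
    constructor
    · rintro ⟨he, rfl⟩
      exact ⟨y, he, rfl, rfl⟩
    · rintro ⟨j, hj, rfl, rfl⟩
      exact ⟨hj, rfl⟩
  rw [this, Finset.card_image_of_injective _ (fun a b h => (Prod.ext_iff.1 h).2),
    parity_filter_card' hdvd]

lemma count_cols_ge (t : ℕ) (ht : t ≤ L) :
    ((Finset.univ : Finset (ZMod L)).filter (fun c => t ≤ c.val)).card = L - t := by
  have h1 : ((Finset.univ : Finset (ZMod L)).filter (fun c => t ≤ c.val)).card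
      = ((Finset.range L).filter (fun x => t ≤ x)).card := by
    apply Finset.card_bij (fun (x : ZMod L) _ => x.val)
    · intro a ha
      simp only [Finset.mem_filter, Finset.mem_range] at *
      exact ⟨a.val_lt, ha.2⟩
    · intro a _ b _ hab
      exact ZMod.val_injective _ hab
    · intro b hb
      simp only [Finset.mem_filter, Finset.mem_range] at hb
      exact ⟨(b : ZMod L), by simp [Finset.mem_filter, ZMod.val_cast_of_lt hb.1, hb.2],
        ZMod.val_cast_of_lt hb.1⟩
  rw [h1]
  have h2 : (Finset.range L).filter (fun x => t ≤ x) = Finset.Ico t L := by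
    ext x
    simp only [Finset.mem_filter, Finset.mem_range, Finset.mem_Ico]
    tauto
  rw [h2, Nat.card_Ico]

lemma count_cols_between (s : ℕ) (hs : s < L) :
    ((Finset.univ : Finset (ZMod L)).filter (fun c => 1 ≤ c.val ∧ c.val ≤ s)).card = s := by
  have h1 : ((Finset.univ : Finset (ZMod L)).filter (fun c => 1 ≤ c.val ∧ c.val ≤ s)).card
      = ((Finset.range L).filter (fun x => 1 ≤ x ∧ x ≤ s)).card := by
    apply Finset.card_bij (fun (x : ZMod L) _ => x.val)
    · intro a ha
      simp only [Finset.mem_filter, Finset.mem_range] at *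
      exact ⟨a.val_lt, ha.2⟩
    · intro a _ b _ hab
      exact ZMod.val_injective _ hab
    · intro b hb
      simp only [Finset.mem_filter, Finset.mem_range] at hb
      exact ⟨(b : ZMod L), by simp [Finset.mem_filter, ZMod.val_cast_of_lt hb.1, hb.2],
        ZMod.val_cast_of_lt hb.1⟩
  rw [h1]
  have h2 : (Finset.range L).filter (fun x => 1 ≤ x ∧ x ≤ s) = Finset.Ico 1 (s + 1) := by
    ext x
    simp only [Finset.mem_filter, Finset.mem_range, Finset.mem_Ico]
    omega
  rw [h2, Nat.card_Ico]
  omega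

lemma card_stE (hdvd : 2 ∣ L) (t : ℕ) (ht : t ≤ L) :
    (stE L t).card = (L - t) * (L / 2) := by
  rw [card_eq_sum_colS]
  have hcol : ∀ c : ZMod L, (colS (stE L t) c).card
      = if t ≤ c.val then L / 2 else 0 := by
    intro c
    by_cases hc : t ≤ c.val
    · rw [if_pos hc]
      have : colS (stE L t) c = colS (evenClass L) c := by
        ext v
        simp only [colS, mem_stE, Finset.mem_filter, evenClass, isEvenVertex.eq_1, Finset.mem_univ,
          true_and]
        constructor
        · rintro ⟨⟨h1, _⟩, h3⟩; exact ⟨h1, h3⟩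
        · rintro ⟨h1, h3⟩; exact ⟨⟨h1, h3 ▸ hc⟩, h3⟩
      rw [this, colS_evenClass hdvd]
    · rw [if_neg hc]
      rw [Finset.card_eq_zero]
      rw [Finset.eq_empty_iff_forall_notMem]
      intro v hv
      simp only [colS, mem_stE, Finset.mem_filter] at hv
      exact hc (hv.2 ▸ hv.1.2)
  rw [Finset.sum_congr rfl (fun c _ => hcol c)]
  rw [← Finset.sum_filter, Finset.sum_const, count_cols_ge t ht, smul_eq_mul]

lemma card_stO (hdvd : 2 ∣ L) (s : ℕ) (hs : s < L) :
    (stO L s).card = s * (L / 2) := by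
  rw [card_eq_sum_colS]
  have hcol : ∀ c : ZMod L, (colS (stO L s) c).card
      = if 1 ≤ c.val ∧ c.val ≤ s then L / 2 else 0 := by
    intro c
    by_cases hc : 1 ≤ c.val ∧ c.val ≤ s
    · rw [if_pos hc]
      have : colS (stO L s) c = colS (oddClass L) c := by
        ext v
        simp only [colS, mem_stO, Finset.mem_filter, oddClass, isEvenVertex.eq_1, Finset.mem_univ,
          true_and]
        constructor
        · rintro ⟨⟨h1, _⟩, h3⟩; exact ⟨h1, h3⟩
        · rintro ⟨h1, h3⟩; exact ⟨⟨h1, h3 ▸ hc.1, h3 ▸ hc.2⟩, h3⟩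
      rw [this, colS_oddClass hdvd]
    · rw [if_neg hc]
      rw [Finset.card_eq_zero, Finset.eq_empty_iff_forall_notMem]
      intro v hv
      simp only [colS, mem_stO, Finset.mem_filter] at hv
      exact hc ⟨hv.2 ▸ hv.1.2.1, hv.2 ▸ hv.1.2.2⟩
  rw [Finset.sum_congr rfl (fun c _ => hcol c)]
  rw [← Finset.sum_filter, Finset.sum_const, count_cols_between s hs, smul_eq_mul]

/-! ### Phase states -/

noncomputable def oddRows (L : ℕ) [NeZero L] (k : ℕ) : Finset (ZMod L) :=
  Finset.univ.filter (fun j => ¬ Even (k + j.val))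

noncomputable def stage (L : ℕ) [NeZero L] (k : ℕ) : Finset (V L) :=
  stE L (k + 1) ∪ stO L (k - 1)

noncomputable def phaseState (L : ℕ) [NeZero L] (k : ℕ) (D : Finset (ZMod L)) : Finset (V L) :=
  (stage L k \ D.image (fun j => (((k + 1 : ℕ) : ZMod L), j))) ∪
    D.image (fun j => (((k : ℕ) : ZMod L), j))

lemma mem_oddRows {k : ℕ} {j : ZMod L} : j ∈ oddRows L k ↔ ¬ Even (k + j.val) := by
  simp [oddRows]

lemma eq_cast_iff_val {a : ℕ} (ha : a < L) (x : ZMod L) : x = ((a : ℕ) : ZMod L) ↔ x.val = a := by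
  constructor
  · rintro rfl
    exact ZMod.val_cast_of_lt ha
  · intro h
    have : ((x.val : ℕ) : ZMod L) = x := by
      rw [ZMod.natCast_val, ZMod.cast_id]
    rw [← this, h]

lemma mem_pair_image {c : ℕ} (hc : c < L) {D : Finset (ZMod L)} {v : V L} :
    v ∈ D.image (fun j => (((c : ℕ) : ZMod L), j)) ↔ v.1.val = c ∧ v.2 ∈ D := by
  simp only [Finset.mem_image]
  constructor
  · rintro ⟨j, hj, rfl⟩
    exact ⟨ZMod.val_cast_of_lt hc, hj⟩
  · rintro ⟨h1, h2⟩
    refine ⟨v.2, h2, ?_⟩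
    have : v.1 = ((c : ℕ) : ZMod L) := (eq_cast_iff_val hc v.1).2 h1
    rw [← this]

lemma mem_stage {k : ℕ} {v : V L} : v ∈ stage L k ↔
    (Even (v.1.val + v.2.val) ∧ k + 1 ≤ v.1.val) ∨
    (¬ Even (v.1.val + v.2.val) ∧ 1 ≤ v.1.val ∧ v.1.val ≤ k - 1) := by
  simp only [stage, Finset.mem_union, mem_stE, mem_stO]

lemma mem_phaseState {k : ℕ} (hk1 : 1 ≤ k) (hk2 : k + 1 < L) {D : Finset (ZMod L)}
    (hD : D ⊆ oddRows L k) {v : V L} : v ∈ phaseState L k D ↔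
    (Even (v.1.val + v.2.val) ∧ k + 1 ≤ v.1.val ∧ ¬ (v.1.val = k + 1 ∧ v.2 ∈ D)) ∨
    (¬ Even (v.1.val + v.2.val) ∧
      ((1 ≤ v.1.val ∧ v.1.val ≤ k - 1) ∨ (v.1.val = k ∧ v.2 ∈ D))) := by
  have hkL : k < L := by omega
  simp only [phaseState, Finset.mem_union, Finset.mem_sdiff, mem_stage,
    mem_pair_image hk2, mem_pair_image hkL]
  constructor
  · rintro (⟨h1 | h1, h2⟩ | h1)
    · exact Or.inl ⟨h1.1, h1.2, h2⟩
    · exact Or.inr ⟨h1.1, Or.inl h1.2⟩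
    · refine Or.inr ⟨?_, Or.inr ⟨h1.1, h1.2⟩⟩
      have := hD h1.2
      rw [mem_oddRows] at this
      rw [h1.1]
      exact this
  · rintro (⟨h1, h2, h3⟩ | ⟨h1, h2 | h2⟩)
    · exact Or.inl ⟨Or.inl ⟨h1, h2⟩, h3⟩
    · refine Or.inl ⟨Or.inr ⟨h1, h2⟩, ?_⟩
      rintro ⟨hc, -⟩
      omega
    · exact Or.inr h2

lemma val_succ (hL : 4 ≤ L) (x : ZMod L) :
    (x + 1).val = if x.val = L - 1 then 0 else x.val + 1 := by
  rw [ZMod.val_add, ZMod.val_one'' (by omega)]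
  have := x.val_lt
  by_cases h : x.val = L - 1
  · rw [if_pos h, h]
    have : L - 1 + 1 = L := by omega
    rw [this, Nat.mod_self]
  · rw [if_neg h, Nat.mod_eq_of_lt (by omega)]

lemma indep_phaseState (hL : 4 ≤ L) (hdvd : 2 ∣ L) {k : ℕ} (hk1 : 1 ≤ k) (hk2 : k + 2 ≤ L)
    {D : Finset (ZMod L)} (hD : D ⊆ oddRows L k) : Indep L (phaseState L k D) := by
  have hmm : ∀ u v : V L, u ∈ phaseState L k D → v ∈ phaseState L k D →
      (torus L).Adj u v → Even (u.1.val + u.2.val) → False := by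
    intro u v hu hv hadj hue
    have hvo : ¬ Even (v.1.val + v.2.val) := ((adj_parity hL hdvd hadj).1 hue)
    rw [mem_phaseState hk1 (by omega) hD] at hu hv
    rcases hu with ⟨_, hu2, hu3⟩ | ⟨hu1, _⟩
    swap
    · exact hu1 hue
    rcases hv with ⟨hv1, _⟩ | ⟨_, hv2⟩
    · exact hvo hv1
    have hvval : 1 ≤ v.1.val ∧ v.1.val ≤ k := by
      rcases hv2 with ⟨h1, h2⟩ | ⟨h1, _⟩
      · omega
      · omega
    rcases (adj_iff.1 hadj).2 with he | he | he | he
    · -- same column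
      have h0 : v.1 = u.1 := by rw [he]
      have : v.1.val = u.1.val := by rw [h0]
      omega
    · have h0 : v.1 = u.1 := by rw [he]
      have : v.1.val = u.1.val := by rw [h0]
      omega
    · -- v = (u.1 + 1, u.2)
      have h1 : v.1 = u.1 + 1 := by rw [he]
      have h2 : v.1.val = (u.1 + 1).val := by rw [h1]
      rw [val_succ hL] at h2
      have := u.1.val_lt
      by_cases hc : u.1.val = L - 1
      · rw [if_pos hc] at h2
        omega
      · rw [if_neg hc] at h2
        omega
    · -- v = (u.1 - 1, u.2), i.e. u.1 = v.1 + 1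
      have h1 : v.1 + 1 = u.1 := by
        have : v.1 = u.1 - 1 := by rw [he]
        rw [this]
        ring
      have h2 : (v.1 + 1).val = u.1.val := by rw [h1]
      rw [val_succ hL] at h2
      have hvlt := v.1.val_lt
      by_cases hc : v.1.val = L - 1
      · omega
      · rw [if_neg hc] at h2
        -- u.1.val = v.1.val + 1 ≤ k + 1, and u.1.val ≥ k + 1 so both are forced
        have hu1k : u.1.val = k + 1 := by omega
        have hv1k : v.1.val = k := by omega
        -- hence v is in the `addSet` branch, so v.2 ∈ D; but u.2 = v.2
        have hv2D : v.2 ∈ D := by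
          rcases hv2 with ⟨h3, h4⟩ | ⟨_, h4⟩
          · omega
          · exact h4
        have hu2v2 : u.2 = v.2 := by rw [he]
        exact hu3 ⟨hu1k, by rw [hu2v2]; exact hv2D⟩
  intro u hu v hv hadj
  by_cases hue : Even (u.1.val + u.2.val)
  · exact hmm u v hu hv hadj hue
  · have hve : Even (v.1.val + v.2.val) := by
      by_contra hvo
      exact hvo (by
        have := (adj_parity hL hdvd hadj)
        tauto)
    exact hmm v u hv hu hadj.symm hve

lemma stE_stO_disjoint {t s : ℕ} : Disjoint (stE L t) (stO L s) := by
  rw [Finset.disjoint_left]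
  intro v hv hv'
  rw [mem_stE] at hv
  rw [mem_stO] at hv'
  exact hv'.1 hv.1

lemma card_stage (hdvd : 2 ∣ L) {k : ℕ} (hk1 : 1 ≤ k) (hk2 : k ≤ L - 2) :
    (stage L k).card = (L - 2) * (L / 2) := by
  have h4 : 4 ≤ L := by omega
  rw [stage, Finset.card_union_of_disjoint stE_stO_disjoint,
    card_stE hdvd (k + 1) (by omega), card_stO hdvd (k - 1) (by omega), ← Nat.add_mul]
  congr 1
  omega

lemma phaseState_empty {k : ℕ} : phaseState L k ∅ = stage L k := by
  simp [phaseState]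

lemma half_eq {m : ℕ} (hm : L = 2 * m) : L ^ 2 / 2 = 2 * m * m := by
  have h1 : L ^ 2 = 2 * (2 * m * m) := by rw [hm]; ring
  rw [h1]
  omega

set_option maxHeartbeats 2000000 in
lemma phase_step (hL : 4 ≤ L) (hdvd : 2 ∣ L) {m : ℕ} (hm : L = 2 * m) {k : ℕ}
    (hk1 : 1 ≤ k) (hk2 : k ≤ L - 2) {D : Finset (ZMod L)} (hD : D ⊆ oddRows L k)
    {j : ZMod L} (hj : j ∈ oddRows L k) (hjD : j ∉ D)
    (hcard : (phaseState L k D).card = 2 * m * m - 2 * m) :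
    Reach L (L + 1) (phaseState L k D) (phaseState L k (insert j D)) ∧
      (phaseState L k (insert j D)).card = 2 * m * m - 2 * m := by
  have hm2 : 2 ≤ m := by omega
  have hkL : k < L := by omega
  have hk1L : k + 1 < L := by omega
  have hparj : ¬ Even (k + j.val) := mem_oddRows.1 hj
  set X := phaseState L k D with hX_def
  have hindX : Indep L X := indep_phaseState hL hdvd hk1 (by omega) hD
  set r : V L := (((k + 1 : ℕ) : ZMod L), j) with hr_def
  set a : V L := (((k : ℕ) : ZMod L), j) with ha_def
  have hvalr : r.1.val = k + 1 := ZMod.val_cast_of_lt hk1L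
  have hvala : a.1.val = k := ZMod.val_cast_of_lt hkL
  have hparr : Even (r.1.val + r.2.val) := by
    rw [hvalr]
    have : k + 1 + j.val = (k + j.val) + 1 := by omega
    rw [this, Nat.even_add_one]
    exact hparj
  have hrX : r ∈ X := by
    rw [hX_def, mem_phaseState hk1 hk1L hD]
    left
    refine ⟨hparr, by omega, ?_⟩
    rintro ⟨-, h2⟩
    exact hjD h2
  set X' := X.erase r with hX'_def
  have hcard' : X'.card = 2 * m * m - 2 * m - 1 := by
    rw [hX'_def, Finset.card_erase_of_mem hrX, hcard]
  have hgapX' : gap L X' ≤ L + 1 := by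
    rw [gap, half_eq hm, hcard']
    omega
  have step1 : Reach L (L + 1) X X' := reach_erase hindX hgapX'
  have haX : a ∉ X := by
    rw [hX_def, mem_phaseState hk1 hk1L hD]
    rintro (⟨h1, -⟩ | ⟨-, (⟨h1, h2⟩ | ⟨-, h2⟩)⟩)
    · rw [hvala] at h1
      exact hparj h1
    · rw [hvala] at h2
      omega
    · exact hjD h2
  have haX' : a ∉ X' := fun h => haX (Finset.mem_of_mem_erase h)
  have hAnbr : ∀ w ∈ X', ¬ (torus L).Adj a w := by
    intro w hw hadj
    have hwX : w ∈ X := Finset.mem_of_mem_erase hw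
    have hwr : w ≠ r := Finset.ne_of_mem_erase hw
    have hwmem := (mem_phaseState hk1 hk1L hD).1 hwX
    rcases (adj_iff.1 hadj).2 with he | he | he | he
    · -- w = (a.1, a.2 + 1) : even parity, column k
      have h1 : w.1.val = k := by rw [he]; exact hvala
      have h2 : Even (w.1.val + w.2.val) := by
        rw [he]
        simp only
        rw [hvala]
        rw [Nat.even_add, val_add_one_parity hL hdvd]
        rw [Nat.even_add] at hparj
        tauto
      rcases hwmem with ⟨-, h3, -⟩ | ⟨h3, -⟩
      · omega
      · exact h3 h2
    · have h1 : w.1.val = k := by rw [he]; exact hvala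
      have h2 : Even (w.1.val + w.2.val) := by
        rw [he]
        simp only
        rw [hvala]
        rw [Nat.even_add, val_sub_one_parity hL hdvd]
        rw [Nat.even_add] at hparj
        tauto
      rcases hwmem with ⟨-, h3, -⟩ | ⟨h3, -⟩
      · omega
      · exact h3 h2
    · -- w = (a.1 + 1, a.2) = r
      apply hwr
      rw [he]
      show (((k : ℕ) : ZMod L) + 1, j) = ((((k + 1 : ℕ)) : ZMod L), j)
      have hc : ((k : ℕ) : ZMod L) + 1 = (((k + 1 : ℕ)) : ZMod L) := by push_cast; ring
      rw [hc]
    · -- w = (a.1 - 1, a.2) : even parity, column k - 1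
      have hcast : ((k : ℕ) : ZMod L) - 1 = (((k - 1 : ℕ)) : ZMod L) := by
        have : (k : ℕ) = (k - 1) + 1 := by omega
        rw [this]
        push_cast
        ring
      have h1 : w.1.val = k - 1 := by
        have h0 : w.1 = a.1 - 1 := by rw [he]
        rw [h0]
        show ((((k : ℕ) : ZMod L)) - 1).val = k - 1
        rw [hcast]
        exact ZMod.val_cast_of_lt (by omega)
      have h2 : Even (w.1.val + w.2.val) := by
        have hw2 : w.2 = j := by rw [he]
        rw [h1, hw2]
        have heq : (k - 1 + j.val) + 1 = k + j.val := by omega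
        have h5 : ¬ Even ((k - 1 + j.val) + 1) := by rw [heq]; exact hparj
        rw [Nat.even_add_one] at h5
        exact not_not.1 h5
      rcases hwmem with ⟨-, h3, -⟩ | ⟨h3, -⟩
      · omega
      · exact h3 h2
  have hIndep2 : Indep L (insert a X') := by
    intro u hu v hv
    rcases Finset.mem_insert.1 hu with rfl | hu <;> rcases Finset.mem_insert.1 hv with rfl | hv
    · exact fun h => (torus L).irrefl h
    · exact hAnbr v hv
    · exact fun h => hAnbr u hu h.symm
    · exact indep_subset hindX (Finset.erase_subset _ _) u hu v hv
  have step2 : Reach L (L + 1) X' (insert a X') := reach_insert haX' hIndep2 hgapX'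
  have hD' : insert j D ⊆ oddRows L k := Finset.insert_subset hj hD
  have heq : insert a X' = phaseState L k (insert j D) := by
    ext v
    rw [mem_phaseState hk1 hk1L hD']
    rw [Finset.mem_insert, hX'_def, Finset.mem_erase, hX_def, mem_phaseState hk1 hk1L hD]
    constructor
    · rintro (rfl | ⟨hvr, hmem⟩)
      · right
        refine ⟨by rw [hvala]; exact hparj, Or.inr ⟨hvala, Finset.mem_insert_self _ _⟩⟩
      · rcases hmem with ⟨h1, h2, h3⟩ | ⟨h1, h2⟩
        · left
          refine ⟨h1, h2, ?_⟩
          rintro ⟨h4, h5⟩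
          rcases Finset.mem_insert.1 h5 with rfl | h5
          · exact hvr (Prod.ext ((eq_cast_iff_val hk1L v.1).2 h4) rfl)
          · exact h3 ⟨h4, h5⟩
        · right
          refine ⟨h1, ?_⟩
          rcases h2 with h2 | ⟨h2, h3⟩
          · exact Or.inl h2
          · exact Or.inr ⟨h2, Finset.mem_insert_of_mem h3⟩
    · rintro (⟨h1, h2, h3⟩ | ⟨h1, h2⟩)
      · right
        have hvr : v ≠ r := by
          rintro rfl
          exact h3 ⟨hvalr, Finset.mem_insert_self _ _⟩
        refine ⟨hvr, Or.inl ⟨h1, h2, ?_⟩⟩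
        rintro ⟨h4, h5⟩
        exact h3 ⟨h4, Finset.mem_insert_of_mem h5⟩
      · rcases h2 with ⟨h2, h3⟩ | ⟨h2, h3⟩
        · right
          refine ⟨?_, Or.inr ⟨h1, Or.inl ⟨h2, h3⟩⟩⟩
          rintro rfl
          rw [hvalr] at h3
          omega
        · rcases Finset.mem_insert.1 h3 with rfl | h3
          · left
            exact Prod.ext ((eq_cast_iff_val hkL v.1).2 h2) rfl
          · right
            refine ⟨?_, Or.inr ⟨h1, Or.inr ⟨h2, h3⟩⟩⟩
            rintro rfl
            rw [hvalr] at h2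
            omega
  have hcard2 : (phaseState L k (insert j D)).card = 2 * m * m - 2 * m := by
    rw [← heq, Finset.card_insert_of_notMem haX', hcard']
    have hmm' : 2 * m * 2 ≤ 2 * m * m := Nat.mul_le_mul_left _ (by omega)
    omega
  refine ⟨?_, hcard2⟩
  rw [← heq]
  exact reach_trans step1 step2

lemma card_stage_m (hdvd : 2 ∣ L) {m : ℕ} (hm : L = 2 * m) {k : ℕ} (hk1 : 1 ≤ k)
    (hk2 : k ≤ L - 2) : (stage L k).card = 2 * m * m - 2 * m := by
  rw [card_stage hdvd hk1 hk2, hm]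
  have hdiv : 2 * m / 2 = m := by omega
  rw [hdiv, tsub_mul]

lemma indep_stage (hL : 4 ≤ L) (hdvd : 2 ∣ L) {k : ℕ} (hk1 : 1 ≤ k) (hk2 : k + 2 ≤ L) :
    Indep L (stage L k) := by
  rw [← phaseState_empty]
  exact indep_phaseState hL hdvd hk1 hk2 (Finset.empty_subset _)

lemma phase_reach (hL : 4 ≤ L) (hdvd : 2 ∣ L) {m : ℕ} (hm : L = 2 * m) {k : ℕ}
    (hk1 : 1 ≤ k) (hk2 : k ≤ L - 2) :
    ∀ D : Finset (ZMod L), D ⊆ oddRows L k →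
      Reach L (L + 1) (stage L k) (phaseState L k D) ∧
      (phaseState L k D).card = 2 * m * m - 2 * m := by
  intro D
  induction D using Finset.induction_on with
  | empty =>
      intro _
      have hcs : (stage L k).card = 2 * m * m - 2 * m := card_stage_m hdvd hm hk1 hk2
      constructor
      · rw [phaseState_empty]
        apply reach_refl (indep_stage hL hdvd hk1 (by omega))
        rw [gap, half_eq hm, hcs]
        omega
      · rw [phaseState_empty]
        exact hcs
  | @insert j D hjD ih =>
      intro hsub
      have hj : j ∈ oddRows L k := hsub (Finset.mem_insert_self _ _)
      have hD : D ⊆ oddRows L k := fun x hx => hsub (Finset.mem_insert_of_mem hx)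
      obtain ⟨ihr, ihc⟩ := ih hD
      obtain ⟨sr, sc⟩ := phase_step hL hdvd hm hk1 hk2 hD hj hjD ihc
      exact ⟨reach_trans ihr sr, sc⟩

lemma phaseState_full (hL : 4 ≤ L) {k : ℕ} (hk1 : 1 ≤ k) (hk2 : k ≤ L - 2) :
    phaseState L k (oddRows L k) = stage L (k + 1) := by
  ext v
  rw [mem_phaseState hk1 (by omega) (le_refl _), mem_stage]
  have hrw : v.2 ∈ oddRows L k ↔ ¬ Even (k + v.2.val) := mem_oddRows
  constructor
  · rintro (⟨h1, h2, h3⟩ | ⟨h1, (⟨h2, h3⟩ | ⟨h2, h3⟩)⟩)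
    · left
      refine ⟨h1, ?_⟩
      rcases Nat.lt_or_ge (k + 1) v.1.val with h | h
      · omega
      · exfalso
        apply h3
        have hval : v.1.val = k + 1 := by omega
        refine ⟨hval, hrw.2 ?_⟩
        rw [hval] at h1
        intro hcon
        have heq2 : k + 1 + v.2.val = (k + v.2.val) + 1 := by omega
        rw [heq2, Nat.even_add_one] at h1
        exact h1 hcon
    · right
      refine ⟨h1, h2, by omega⟩
    · right
      refine ⟨h1, by omega, by omega⟩
  · rintro (⟨h1, h2⟩ | ⟨h1, h2, h3⟩)
    · left
      refine ⟨h1, by omega, ?_⟩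
      rintro ⟨h4, -⟩
      omega
    · right
      refine ⟨h1, ?_⟩
      by_cases hvk : v.1.val = k
      · right
        refine ⟨hvk, hrw.2 ?_⟩
        rw [← hvk]
        exact h1
      · left
        refine ⟨h2, by omega⟩

lemma sweep (hL : 4 ≤ L) (hdvd : 2 ∣ L) {m : ℕ} (hm : L = 2 * m) :
    ∀ k, 1 ≤ k → k ≤ L - 1 → Reach L (L + 1) (stage L 1) (stage L k) := by
  intro k
  induction k with
  | zero => intro h; omega
  | succ p ih =>
      intro h1 h2
      by_cases hp : p = 0
      · subst hp
        apply reach_refl (indep_stage hL hdvd (by omega) (by omega))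
        rw [gap, half_eq hm, card_stage_m hdvd hm (by omega) (by omega)]
        omega
      · have hstep := phase_reach hL hdvd hm (k := p) (by omega) (by omega)
          (oddRows L p) (le_refl _)
        have := phaseState_full hL (k := p) (by omega) (by omega)
        rw [this] at hstep
        exact reach_trans (ih (by omega) (by omega)) hstep.1

lemma indep_even_subset (hL : 4 ≤ L) (hdvd : 2 ∣ L) {X : Finset (V L)}
    (h : X ⊆ evenClass L) : Indep L X := by
  intro u hu v hv hadj
  have h1 : Even (u.1.val + u.2.val) := by
    have := h hu
    simpa [evenClass, isEvenVertex.eq_1] using this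
  have h2 : Even (v.1.val + v.2.val) := by
    have := h hv
    simpa [evenClass, isEvenVertex.eq_1] using this
  exact ((adj_parity hL hdvd hadj).1 h1) h2

lemma indep_odd_subset (hL : 4 ≤ L) (hdvd : 2 ∣ L) {X : Finset (V L)}
    (h : X ⊆ oddClass L) : Indep L X := by
  intro u hu v hv hadj
  have h1 : ¬ Even (u.1.val + u.2.val) := by
    have := h hu
    simpa [oddClass, isEvenVertex.eq_1] using this
  have h2 : ¬ Even (v.1.val + v.2.val) := by
    have := h hv
    simpa [oddClass, isEvenVertex.eq_1] using this
  have := adj_parity hL hdvd hadj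
  tauto

lemma reach_EO (hL : 4 ≤ L) (hdvd : 2 ∣ L) {m : ℕ} (hm : L = 2 * m) :
    Reach L (L + 1) (evenClass L) (oddClass L) := by
  have hm2 : 2 ≤ m := by omega
  -- phase 0 : evenClass → stage 1
  have hstage1 : stage L 1 = evenClass L \ (evenClass L).filter (fun v => v.1.val ≤ 1) := by
    ext v
    rw [mem_stage, Finset.mem_sdiff, Finset.mem_filter]
    simp only [evenClass, isEvenVertex.eq_1, Finset.mem_filter, Finset.mem_univ, true_and]
    constructor
    · rintro (⟨h1, h2⟩ | ⟨h1, h2, h3⟩)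
      · exact ⟨h1, fun hcon => by omega⟩
      · omega
    · rintro ⟨h1, h2⟩
      left
      refine ⟨h1, ?_⟩
      by_contra hcon
      exact h2 ⟨h1, by omega⟩
  have hreach0 : Reach L (L + 1) (evenClass L) (stage L 1) := by
    rw [hstage1]
    apply reach_sdiff _ (indep_even_subset hL hdvd (le_refl _))
    rw [← hstage1, gap, half_eq hm, card_stage_m hdvd hm (by omega) (by omega)]
    omega
  -- main sweep
  have hreach1 : Reach L (L + 1) (stage L 1) (stage L (L - 1)) :=
    sweep hL hdvd hm (L - 1) (by omega) (le_refl _)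
  -- end phase
  have hend0 : stage L (L - 1) = stO L (L - 2) := by
    ext v
    rw [mem_stage, mem_stO]
    have := v.1.val_lt
    constructor
    · rintro (⟨h1, h2⟩ | ⟨h1, h2, h3⟩)
      · omega
      · exact ⟨h1, h2, by omega⟩
    · rintro ⟨h1, h2, h3⟩
      right
      exact ⟨h1, h2, by omega⟩
  have hend1 : stO L (L - 2) ∪ (oddClass L).filter (fun v => v.1.val = L - 1)
      = stO L (L - 1) := by
    ext v
    rw [Finset.mem_union, mem_stO, mem_stO, Finset.mem_filter]
    simp only [oddClass, isEvenVertex.eq_1, Finset.mem_filter, Finset.mem_univ, true_and]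
    have := v.1.val_lt
    constructor
    · rintro (⟨h1, h2, h3⟩ | ⟨h1, h2⟩)
      · exact ⟨h1, h2, by omega⟩
      · exact ⟨h1, by omega, by omega⟩
    · rintro ⟨h1, h2, h3⟩
      by_cases hc : v.1.val = L - 1
      · exact Or.inr ⟨h1, hc⟩
      · exact Or.inl ⟨h1, h2, by omega⟩
  have hend2 : stO L (L - 1) ∪ (oddClass L).filter (fun v => v.1.val = 0)
      = oddClass L := by
    ext v
    rw [Finset.mem_union, mem_stO, Finset.mem_filter]
    simp only [oddClass, isEvenVertex.eq_1, Finset.mem_filter, Finset.mem_univ, true_and]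
    have := v.1.val_lt
    constructor
    · rintro (⟨h1, -, -⟩ | ⟨h1, -⟩)
      · exact h1
      · exact h1
    · intro h1
      by_cases hc : v.1.val = 0
      · exact Or.inr ⟨h1, hc⟩
      · exact Or.inl ⟨h1, by omega, by omega⟩
  have hidO2 : (L - 2) * (L / 2) = 2 * m * m - 2 * m := by
    rw [hm]
    have hdiv : 2 * m / 2 = m := by omega
    rw [hdiv, tsub_mul]
  have hidO1 : (L - 1) * (L / 2) = 2 * m * m - m := by
    rw [hm]
    have hdiv : 2 * m / 2 = m := by omega
    rw [hdiv, tsub_mul, one_mul]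
  have hsubO1 : stO L (L - 1) ⊆ oddClass L := by
    intro v hv
    rw [mem_stO] at hv
    simp only [oddClass, isEvenVertex.eq_1, Finset.mem_filter, Finset.mem_univ, true_and]
    exact hv.1
  have hreach2 : Reach L (L + 1) (stO L (L - 2)) (stO L (L - 1)) := by
    rw [← hend1]
    apply reach_union _ ?_ ?_
    · rw [hend1]
      exact indep_odd_subset hL hdvd hsubO1
    · rw [gap, half_eq hm, card_stO hdvd (L - 2) (by omega), hidO2]
      omega
  have hreach3 : Reach L (L + 1) (stO L (L - 1)) (oddClass L) := by
    rw [← hend2]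
    apply reach_union _ ?_ ?_
    · rw [hend2]
      exact indep_odd_subset hL hdvd (le_refl _)
    · rw [gap, half_eq hm, card_stO hdvd (L - 1) (by omega), hidO1]
      omega
  exact reach_trans (reach_trans (reach_trans hreach0 hreach1) (hend0 ▸ hreach2)) hreach3

end S14

/-- For the `L×L` toric grid (`L ≥ 4` even), the communication
height between the two maximum independent sets `E` and `O` satisfies
`Γ = φ(E,O) = L + 1`. -/
theorem stmt_14 (L : ℕ) [NeZero L] (hL : 4 ≤ L) (hLeven : Even L) :
    commHeight L (evenClass L) (oddClass L) = L + 1 := by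
  obtain ⟨m0, hm0⟩ := hLeven
  have hm : L = 2 * m0 := by omega
  have hdvd : 2 ∣ L := ⟨m0, hm⟩
  have hub : (L + 1) ∈ {b : ℕ | ∃ ω, IsFlipPath L ω (evenClass L) (oddClass L) ∧
      ∀ J ∈ ω, gap L J ≤ b} := by
    obtain ⟨ω, h1, h2⟩ := S14.reach_EO hL hdvd hm
    exact ⟨ω, h1, h2⟩
  have hlb : ∀ b ∈ {b : ℕ | ∃ ω, IsFlipPath L ω (evenClass L) (oddClass L) ∧
      ∀ J ∈ ω, gap L J ≤ b}, L + 1 ≤ b := by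
    rintro b ⟨ω, h1, h2⟩
    by_contra hcon
    push_neg at hcon
    exact S14.no_low_path hL hdvd ω h1 (fun J hJ => le_trans (h2 J hJ) (by omega))
  rw [commHeight]
  exact le_antisymm (Nat.sInf_le hub) (hlb _ (Nat.sInf_mem ⟨L + 1, hub⟩))
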